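/- Combining the above: in the lattice Λ = Z^{11} with Euler form χ, there is no class v ∈ Λ with χ(v, v) = 1 such that χ(v, mᵢ) = 0 for all i = 1,...,9, where (m₁,...,m₉) are the classes of O(K), O(K+e₂),...,O(K+e₈), O(K-2e₁). In other words, the numerically semiorthonormal sequence (m₁,...,m₉) cannot be extended by any numerically exceptional class orthogonal to it. -/

import Mathlib

/-- Intersection form of signature (1,8) on Z^9: y·y' = y₀y₀' - y₁y₁' - ... - y₈y₈'. -/
def ip (y y' : Fin 9 → ℤ) : ℤ := y 0 * y' 0 - ∑ i : Fin 8, y i.succ * y' i.succ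

/-- Canonical class K = -3h + e₁ + ... + e₈. -/
def K : Fin 9 → ℤ := ![-3, 1, 1, 1, 1, 1, 1, 1, 1]

/-- e j : the j-th standard basis vector (j = 0 is h, j = 1..8 are the exceptional classes). -/
def e (j : ℕ) : Fin 9 → ℤ := fun k => if (k : ℕ) = j then 1 else 0

/-- The Euler form on the lattice Λ = Z × Z^9 × Z of (rank, c₁, c₁²-2c₂)-vectors. -/
def chi (v w : ℤ × (Fin 9 → ℤ) × ℤ) : ℚ :=
  ((v.1 * w.1 : ℤ) : ℚ)
  - (1/2 : ℚ) * ((v.1 * ip w.2.1 K - w.1 * ip v.2.1 K : ℤ) : ℚ)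
  + (1/2 : ℚ) * ((v.1 * w.2.2 + w.1 * v.2.2 - 2 * ip v.2.1 w.2.1 : ℤ) : ℚ)

/-- Divisor class of the i-th member of the sequence: K, K+e₂, ..., K+e₈, K-2e₁. -/
def Dm (i : Fin 9) : Fin 9 → ℤ :=
  if (i : ℕ) = 0 then K else if (i : ℕ) = 8 then K - (2:ℤ) • e 1 else K + e ((i : ℕ) + 1)

/-- The numerically semiorthonormal sequence (m₁,...,m₉) as rank-one classes. -/
def m (i : Fin 9) : ℤ × (Fin 9 → ℤ) × ℤ := (1, Dm i, ip (Dm i) (Dm i))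

/-- m₁₀ = -h + (3/2)p, encoded as (0, -h, 3). -/
def m10 : ℤ × (Fin 9 → ℤ) × ℤ := (0, -(e 0), 3)

/-- m₁₁ = 2 + 2K + h - 3e₁ - p, encoded as (2, 2K + h - 3e₁, -2). -/
def m11 : ℤ × (Fin 9 → ℤ) × ℤ := (2, (2:ℤ) • K + e 0 - (3:ℤ) • e 1, -2)

/-- No numerically exceptional class in Λ is numerically semiorthogonal to (m₁,...,m₉). -/
theorem stmt_11 :
    ¬ ∃ v : ℤ × (Fin 9 → ℤ) × ℤ, chi v v = 1 ∧ ∀ i : Fin 9, chi v (m i) = 0 := by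
  rintro ⟨⟨r, y, z⟩, hchi, horth⟩
  have h0 := horth 0
  have h1 := horth 1
  have h2 := horth 2
  have h3 := horth 3
  have h4 := horth 4
  have h5 := horth 5
  have h6 := horth 6
  have h7 := horth 7
  have h8 := horth 8
  rw [show m 0 = (1, ![-3,1,1,1,1,1,1,1,1], 1) from by decide] at h0
  rw [show m 1 = (1, ![-3,1,2,1,1,1,1,1,1], -2) from by decide] at h1
  rw [show m 2 = (1, ![-3,1,1,2,1,1,1,1,1], -2) from by decide] at h2
  rw [show m 3 = (1, ![-3,1,1,1,2,1,1,1,1], -2) from by decide] at h3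
  rw [show m 4 = (1, ![-3,1,1,1,1,2,1,1,1], -2) from by decide] at h4
  rw [show m 5 = (1, ![-3,1,1,1,1,1,2,1,1], -2) from by decide] at h5
  rw [show m 6 = (1, ![-3,1,1,1,1,1,1,2,1], -2) from by decide] at h6
  rw [show m 7 = (1, ![-3,1,1,1,1,1,1,1,2], -2) from by decide] at h7
  rw [show m 8 = (1, ![-3,-1,1,1,1,1,1,1,1], 1) from by decide] at h8
  simp only [chi, ip, K, Fin.sum_univ_eight, Fin.isValue] at h0 h1 h2 h3 h4 h5 h6 h7 h8 hchi
  norm_num [show (![1,1,1,1,1,1,1,1] : Fin 8 → ℤ) 5 = 1 from rfl,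
    show (![1,1,1,1,1,1,1,1] : Fin 8 → ℤ) 6 = 1 from rfl,
    show (![1,1,1,1,1,1,1,1] : Fin 8 → ℤ) 7 = 1 from rfl,
    show (![1,2,1,1,1,1,1,1] : Fin 8 → ℤ) 5 = 1 from rfl,
    show (![1,2,1,1,1,1,1,1] : Fin 8 → ℤ) 6 = 1 from rfl,
    show (![1,2,1,1,1,1,1,1] : Fin 8 → ℤ) 7 = 1 from rfl,
    show (![1,1,2,1,1,1,1,1] : Fin 8 → ℤ) 5 = 1 from rfl,
    show (![1,1,2,1,1,1,1,1] : Fin 8 → ℤ) 6 = 1 from rfl,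
    show (![1,1,2,1,1,1,1,1] : Fin 8 → ℤ) 7 = 1 from rfl,
    show (![1,1,1,2,1,1,1,1] : Fin 8 → ℤ) 5 = 1 from rfl,
    show (![1,1,1,2,1,1,1,1] : Fin 8 → ℤ) 6 = 1 from rfl,
    show (![1,1,1,2,1,1,1,1] : Fin 8 → ℤ) 7 = 1 from rfl,
    show (![1,1,1,1,2,1,1,1] : Fin 8 → ℤ) 5 = 1 from rfl,
    show (![1,1,1,1,2,1,1,1] : Fin 8 → ℤ) 6 = 1 from rfl,
    show (![1,1,1,1,2,1,1,1] : Fin 8 → ℤ) 7 = 1 from rfl,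
    show (![1,1,1,1,1,2,1,1] : Fin 8 → ℤ) 5 = 2 from rfl,
    show (![1,1,1,1,1,2,1,1] : Fin 8 → ℤ) 6 = 1 from rfl,
    show (![1,1,1,1,1,2,1,1] : Fin 8 → ℤ) 7 = 1 from rfl,
    show (![1,1,1,1,1,1,2,1] : Fin 8 → ℤ) 5 = 1 from rfl,
    show (![1,1,1,1,1,1,2,1] : Fin 8 → ℤ) 6 = 2 from rfl,
    show (![1,1,1,1,1,1,2,1] : Fin 8 → ℤ) 7 = 1 from rfl,
    show (![1,1,1,1,1,1,1,2] : Fin 8 → ℤ) 5 = 1 from rfl,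
    show (![1,1,1,1,1,1,1,2] : Fin 8 → ℤ) 6 = 1 from rfl,
    show (![1,1,1,1,1,1,1,2] : Fin 8 → ℤ) 7 = 2 from rfl,
    show (![-1,1,1,1,1,1,1,1] : Fin 8 → ℤ) 5 = 1 from rfl,
    show (![-1,1,1,1,1,1,1,1] : Fin 8 → ℤ) 6 = 1 from rfl,
    show (![-1,1,1,1,1,1,1,1] : Fin 8 → ℤ) 7 = 1 from rfl] at h0 h1 h2 h3 h4 h5 h6 h7 h8 hchi
  simp only [Matrix.cons_val] at h0 h1 h2 h3 h4 h5 h6 h7 h8 hchi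
  -- clean linear relations over ℚ
  have er : (r : ℚ) = -2 * (y 1 : ℤ) := by linear_combination h0 - h8
  have e2 : ((y 2 : ℤ) : ℚ) = (r : ℚ) := by linear_combination h1 - h0
  have e3 : ((y (Fin.succ 2) : ℤ) : ℚ) = (r : ℚ) := by linear_combination h2 - h0
  have e4 : ((y (Fin.succ 3) : ℤ) : ℚ) = (r : ℚ) := by linear_combination h3 - h0
  have e5 : ((y (Fin.succ 4) : ℤ) : ℚ) = (r : ℚ) := by linear_combination h4 - h0
  have e6 : ((y (Fin.succ 5) : ℤ) : ℚ) = (r : ℚ) := by linear_combination h5 - h0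
  have e7 : ((y (Fin.succ 6) : ℤ) : ℚ) = (r : ℚ) := by linear_combination h6 - h0
  have e8 : ((y (Fin.succ 7) : ℤ) : ℚ) = (r : ℚ) := by linear_combination h7 - h0
  have ez : (z : ℚ) = -3 * (y 0 : ℤ) + 17 * (y 1 : ℤ) := by
    linear_combination 2 * h0 - 9 * er - e2 - e3 - e4 - e5 - e6 - e7 - e8
  have key : ((3 * y 1 - y 0 : ℤ) : ℚ) ^ 2 = 8 * ((y 1 : ℤ) : ℚ) ^ 2 - 1 := by
    push_cast
    linear_combination -hchi + (r + (y 2 : ℤ)) * e2 + (r + (y (Fin.succ 2) : ℤ)) * e3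
      + (r + (y (Fin.succ 3) : ℤ)) * e4 + (r + (y (Fin.succ 4) : ℤ)) * e5
      + (r + (y (Fin.succ 5) : ℤ)) * e6 + (r + (y (Fin.succ 6) : ℤ)) * e7
      + (r + (y (Fin.succ 7) : ℤ)) * e8 + (r : ℚ) * ez
      + (-2 * (y 1 : ℤ) + r + (-3 * (y 0:ℤ) + 17 * (y 1:ℤ)) - 8 * r) * er + (15 * (r:ℚ) - 14 * ((y 1 : ℤ):ℚ)) * er
  have keyZ : (3 * y 1 - y 0) ^ 2 = 8 * (y 1) ^ 2 - 1 := by exact_mod_cast key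
  have hdec : ∀ a b : ZMod 8, (3 * b - a) ^ 2 ≠ 8 * b ^ 2 - 1 := by decide
  have hmod := congrArg (fun n : ℤ => (n : ZMod 8)) keyZ
  push_cast at hmod
  exact hdec ((y 0 : ℤ) : ZMod 8) ((y 1 : ℤ) : ZMod 8) hmod
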